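/- (One-step estimator bound, SAGA.) Let x ∈ ℝ^d and y_1, …, y_n ∈ ℝ^d, and set ḡ = (1/n) ∑_{j=1}^n ∇f_j(y_j). Then (1/n) ∑_{i=1}^n ‖∇f_i(x) − ∇f_i(y_i) + ḡ‖² ≤ 8L (f(x) − f(x*)) + 4L ( ∑_{i=1}^n D_{f_i}(y_i, x*) − [ (1/n) ∑_{i=1}^n D_{f_i}(x, x*) + ((n−1)/n) ∑_{i=1}^n D_{f_i}(y_i, x*) ] ), where the bracketed term is the expectation of ∑_{i=1}^n D_{f_i}(ỹ_i, x*) when the updated memory ỹ is obtained from y by replacing y_i by x for a uniformly random index i ∈ {1,…,n}. -/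

import Mathlib

/-- Bregman divergence `D_g(y, x) = g(y) − g(x) − ⟨∇g(x), y − x⟩`. -/
noncomputable def bregDiv {d : ℕ} (g : EuclideanSpace ℝ (Fin d) → ℝ)
    (y x : EuclideanSpace ℝ (Fin d)) : ℝ :=
  g y - g x - @inner ℝ _ _ (gradient g x) (y - x)


open InnerProductSpace Set
open scoped RealInnerProductSpace

variable {E : Type*} [NormedAddCommGroup E] [InnerProductSpace ℝ E] [CompleteSpace E]

lemma grad_inner (f : E → ℝ) (x v : E) :
    ⟪gradient f x, v⟫_ℝ = fderiv ℝ f x v :=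
  InnerProductSpace.toDual_symm_apply

lemma hasDerivAt_line (f : E → ℝ) (hf : Differentiable ℝ f) (u v : E) (t : ℝ) :
    HasDerivAt (fun s : ℝ => f (u + s • v)) ⟪gradient f (u + t • v), v⟫_ℝ t := by
  have hc : HasDerivAt (fun s : ℝ => u + s • v) v t := by
    simpa using ((hasDerivAt_id t).smul_const v).const_add u
  have h := (hf (u + t • v)).hasFDerivAt.comp_hasDerivAt t hc
  rw [grad_inner]
  exact h

lemma descent_lemma (f : E → ℝ) (hf : Differentiable ℝ f) {L : ℝ} (hL : 0 < L)
    (hs : ∀ a b, ‖gradient f a - gradient f b‖ ≤ L * ‖a - b‖) (u w : E) :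
    f w ≤ f u + ⟪gradient f u, w - u⟫_ℝ + L / 2 * ‖w - u‖ ^ 2 := by
  set v := w - u with hv
  set ψ : ℝ → ℝ := fun t =>
    f (u + t • v) - t * ⟪gradient f u, v⟫_ℝ - L / 2 * t ^ 2 * ‖v‖ ^ 2 with hψdef
  have hψ : ∀ t : ℝ, HasDerivAt ψ
      (⟪gradient f (u + t • v), v⟫_ℝ - ⟪gradient f u, v⟫_ℝ - L * t * ‖v‖ ^ 2) t := by
    intro t
    have h1 := hasDerivAt_line f hf u v t
    have h2 : HasDerivAt (fun s : ℝ => s * ⟪gradient f u, v⟫_ℝ) ⟪gradient f u, v⟫_ℝ t := by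
      simpa using (hasDerivAt_id t).mul_const ⟪gradient f u, v⟫_ℝ
    have h3 : HasDerivAt (fun s : ℝ => L / 2 * s ^ 2 * ‖v‖ ^ 2) (L * t * ‖v‖ ^ 2) t := by
      have := ((hasDerivAt_pow 2 t).const_mul (L / 2)).mul_const (‖v‖ ^ 2)
      refine this.congr_deriv ?_
      ring
    exact (h1.sub h2).sub h3
  have hdiff : Differentiable ℝ ψ := fun t => (hψ t).differentiableAt
  have hanti : AntitoneOn ψ (Icc 0 1) := by
    apply antitoneOn_of_deriv_nonpos (convex_Icc 0 1) hdiff.continuous.continuousOn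
      (fun t _ => (hdiff t).differentiableWithinAt)
    intro t ht
    rw [interior_Icc] at ht
    rw [(hψ t).deriv]
    have hip : ⟪gradient f (u + t • v) - gradient f u, v⟫_ℝ
        ≤ ‖gradient f (u + t • v) - gradient f u‖ * ‖v‖ := real_inner_le_norm _ _
    have hns : ‖gradient f (u + t • v) - gradient f u‖ ≤ L * (t * ‖v‖) := by
      have h := hs (u + t • v) u
      simpa [norm_smul, abs_of_pos ht.1] using h
    rw [inner_sub_left] at hip
    nlinarith [norm_nonneg v, norm_nonneg (gradient f (u + t • v) - gradient f u),
      mul_le_mul_of_nonneg_right hns (norm_nonneg v)]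
  have h01 := hanti (left_mem_Icc.2 zero_le_one) (right_mem_Icc.2 zero_le_one) zero_le_one
  have e1 : u + (1 : ℝ) • v = w := by rw [one_smul, hv]; abel
  have e0 : u + (0 : ℝ) • v = u := by simp
  simp only [hψdef, e1, e0, one_mul, one_pow, zero_mul, mul_zero, sub_zero, zero_pow] at h01
  simp only [ne_eq, OfNat.ofNat_ne_zero, not_false_eq_true, zero_pow, mul_zero, zero_mul,
    sub_zero] at h01
  linarith

lemma convex_first_order (f : E → ℝ) (hconv : ConvexOn ℝ Set.univ f)
    (hf : Differentiable ℝ f) (v z : E) :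
    f v + ⟪gradient f v, z - v⟫_ℝ ≤ f z := by
  set ρ : ℝ → ℝ := fun t => f (v + t • (z - v)) with hρ
  have hρc : ConvexOn ℝ Set.univ ρ := by
    have h := hconv.comp_affineMap (AffineMap.lineMap v z)
    have he : ρ = f ∘ (AffineMap.lineMap v z) := by
      funext t
      simp [hρ, AffineMap.lineMap_apply]
      rw [add_comm]
    rw [he]
    simpa using h
  have hd : HasDerivWithinAt ρ ⟪gradient f v, z - v⟫_ℝ Set.univ 0 := by
    have h := (hasDerivAt_line f hf v (z - v) 0).hasDerivWithinAt (s := Set.univ)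
    rw [show v + (0:ℝ) • (z - v) = v by simp] at h
    exact h
  have := hρc.le_slope_of_hasDerivWithinAt (mem_univ (0:ℝ)) (mem_univ (1:ℝ)) zero_lt_one hd
  rw [slope_def_field] at this
  have hρ1 : ρ 1 = f z := by simp [hρ]
  have hρ0 : ρ 0 = f v := by simp [hρ]
  rw [hρ1, hρ0] at this
  simp at this
  rw [grad_inner, map_sub]
  linarith

lemma hasGradientAt_inner_const (c : E) (z : E) :
    HasGradientAt (fun w => ⟪c, w⟫_ℝ) c z := by
  rw [hasGradientAt_iff_hasFDerivAt]
  have he : (fun w => ⟪c, w⟫_ℝ) = ⇑(toDual ℝ E c) := by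
    funext w; rw [toDual_apply_apply]
  rw [he]
  exact (toDual ℝ E c).hasFDerivAt

lemma cocoercive (f : E → ℝ) (hconv : ConvexOn ℝ Set.univ f) (hf : Differentiable ℝ f)
    {L : ℝ} (hL : 0 < L) (hs : ∀ a b, ‖gradient f a - gradient f b‖ ≤ L * ‖a - b‖) (u v : E) :
    ‖gradient f u - gradient f v‖ ^ 2
      ≤ 2 * L * (f u - f v - ⟪gradient f v, u - v⟫_ℝ) := by
  set c := gradient f v with hc
  set φ : E → ℝ := fun z => f z - ⟪c, z⟫_ℝ with hφ
  have hφg : ∀ z, HasGradientAt φ (gradient f z - c) z := by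
    intro z
    have h1 : HasGradientAt f (gradient f z) z := (hf z).hasGradientAt
    have h2 := hasGradientAt_inner_const c z
    rw [hasGradientAt_iff_hasFDerivAt] at h1 h2 ⊢
    rw [map_sub]
    exact h1.sub h2
  have hφgrad : ∀ z, gradient φ z = gradient f z - c := fun z => (hφg z).gradient
  have hφd : Differentiable ℝ φ := fun z => (hφg z).differentiableAt
  have hφconv : ConvexOn ℝ Set.univ φ := by
    refine ⟨convex_univ, fun p _ q _ a b ha hb hab => ?_⟩
    have h := hconv.2 (mem_univ p) (mem_univ q) ha hb hab
    simp only [hφ, smul_eq_mul] at *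
    rw [inner_add_right, real_inner_smul_right, real_inner_smul_right]
    linarith
  have hφs : ∀ a b, ‖gradient φ a - gradient φ b‖ ≤ L * ‖a - b‖ := by
    intro a b
    rw [hφgrad, hφgrad]
    simpa using hs a b
  -- minimality of φ at v
  have hmin : ∀ z, φ v ≤ φ z := by
    intro z
    have h := convex_first_order φ hφconv hφd v z
    rw [hφgrad v, hc] at h
    simpa using h
  -- descent step
  set g := gradient φ u with hg
  have hdesc := descent_lemma φ hφd hL hφs u (u - L⁻¹ • g)
  have he1 : u - L⁻¹ • g - u = -(L⁻¹ • g) := by abel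
  rw [he1] at hdesc
  have he2 : ⟪gradient φ u, -(L⁻¹ • g)⟫_ℝ = -(L⁻¹ * ‖g‖ ^ 2) := by
    rw [inner_neg_right, real_inner_smul_right, ← hg, real_inner_self_eq_norm_sq]
  have he3 : ‖-(L⁻¹ • g)‖ ^ 2 = L⁻¹ ^ 2 * ‖g‖ ^ 2 := by
    rw [norm_neg, norm_smul]
    simp [abs_of_pos (inv_pos.2 hL), mul_pow]
  rw [he2, he3] at hdesc
  have hLne : L ≠ 0 := ne_of_gt hL
  have hkey : φ v ≤ φ u - ‖g‖ ^ 2 / (2 * L) := by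
    have := hmin (u - L⁻¹ • g)
    have harith : φ u + -(L⁻¹ * ‖g‖ ^ 2) + L / 2 * (L⁻¹ ^ 2 * ‖g‖ ^ 2)
        = φ u - ‖g‖ ^ 2 / (2 * L) := by
      field_simp
      ring
    linarith [hdesc, this]
  have hgval : g = gradient f u - gradient f v := by rw [hg, hφgrad u, hc]
  have hφuv : φ u - φ v = f u - f v - ⟪gradient f v, u - v⟫_ℝ := by
    simp only [hφ, hc, inner_sub_right]
    ring
  rw [← hgval, ← hφuv]
  have h2L : 0 < 2 * L := by linarith
  have h5 : ‖g‖ ^ 2 / (2 * L) ≤ φ u - φ v := by linarith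
  rw [div_le_iff₀ h2L] at h5
  linarith

set_option maxHeartbeats 1000000 in
theorem stmt_16 (n d : ℕ) (hn : 1 ≤ n) (hd : 1 ≤ d) (L : ℝ) (hL : 0 < L)
    (f : Fin n → EuclideanSpace ℝ (Fin d) → ℝ)
    (hconv : ∀ i, ConvexOn ℝ Set.univ (f i))
    (hdiff : ∀ i, Differentiable ℝ (f i))
    (hsmooth : ∀ i x y, ‖gradient (f i) x - gradient (f i) y‖ ≤ L * ‖x - y‖)
    (F : EuclideanSpace ℝ (Fin d) → ℝ)
    (hF : F = fun x => (n : ℝ)⁻¹ * ∑ i, f i x)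
    (xstar : EuclideanSpace ℝ (Fin d)) (hmin : ∀ z, F xstar ≤ F z)
    (x : EuclideanSpace ℝ (Fin d)) (y : Fin n → EuclideanSpace ℝ (Fin d))
    (gbar : EuclideanSpace ℝ (Fin d))
    (hgbar : gbar = (n : ℝ)⁻¹ • ∑ j, gradient (f j) (y j)) :
    (n : ℝ)⁻¹ * ∑ i, ‖gradient (f i) x - gradient (f i) (y i) + gbar‖ ^ 2
      ≤ 8 * L * (F x - F xstar)
        + 4 * L * (∑ i, bregDiv (f i) (y i) xstar
            - ((n : ℝ)⁻¹ * ∑ i, bregDiv (f i) x xstar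
                + (((n : ℝ) - 1) / n) * ∑ i, bregDiv (f i) (y i) xstar)) := by
  have hn0 : (n : ℝ) ≠ 0 := Nat.cast_ne_zero.mpr (by omega)
  -- gradient sum vanishes at the minimizer
  have hFf : HasFDerivAt F ((n : ℝ)⁻¹ • ∑ i, fderiv ℝ (f i) xstar) xstar := by
    rw [hF]
    exact HasFDerivAt.const_mul (HasFDerivAt.fun_sum fun i _ => (hdiff i xstar).hasFDerivAt) _
  have hfd0 : fderiv ℝ F xstar = 0 := by
    have hloc : IsLocalMin F xstar := Filter.Eventually.of_forall hmin
    exact hloc.fderiv_eq_zero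
  have hsumfd : ∑ i, fderiv ℝ (f i) xstar = 0 := by
    have h := hFf.fderiv
    rw [hfd0] at h
    have h2 := smul_eq_zero.mp h.symm
    exact h2.resolve_left (inv_ne_zero hn0)
  have hsumgrad : ∑ i, gradient (f i) xstar = 0 := by
    have hinner : ⟪∑ i, gradient (f i) xstar, ∑ i, gradient (f i) xstar⟫_ℝ = 0 := by
      rw [sum_inner]
      have h3 : ∀ i : Fin n, ⟪gradient (f i) xstar, ∑ i, gradient (f i) xstar⟫_ℝ
          = fderiv ℝ (f i) xstar (∑ i, gradient (f i) xstar) := fun i => grad_inner _ _ _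
      rw [Finset.sum_congr rfl fun i _ => h3 i, ← ContinuousLinearMap.sum_apply, hsumfd]
      rfl
    exact inner_self_eq_zero.mp hinner
  -- Bregman sum identity
  have hbreg : ∀ z, (n : ℝ)⁻¹ * ∑ i, bregDiv (f i) z xstar = F z - F xstar := by
    intro z
    have h1 : ∑ i, bregDiv (f i) z xstar
        = ∑ i, f i z - ∑ i, f i xstar - ⟪∑ i, gradient (f i) xstar, z - xstar⟫_ℝ := by
      rw [sum_inner]
      simp only [bregDiv]
      rw [Finset.sum_sub_distrib, Finset.sum_sub_distrib]
    rw [h1, hsumgrad, inner_zero_left, sub_zero, hF]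
    ring
  -- cocoercivity per summand
  have hcoco : ∀ (i : Fin n) (u : EuclideanSpace ℝ (Fin d)),
      ‖gradient (f i) u - gradient (f i) xstar‖ ^ 2 ≤ 2 * L * bregDiv (f i) u xstar := by
    intro i u
    have h := cocoercive (f i) (hconv i) (hdiff i) hL (hsmooth i) u xstar
    simpa [bregDiv] using h
  set G : Fin n → EuclideanSpace ℝ (Fin d) :=
    fun i => gradient (f i) x - gradient (f i) xstar with hG
  set H : Fin n → EuclideanSpace ℝ (Fin d) :=
    fun i => gradient (f i) (y i) - gradient (f i) xstar with hH
  set S : EuclideanSpace ℝ (Fin d) := ∑ i, H i with hSdef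
  have hgb : gbar = (n : ℝ)⁻¹ • S := by
    rw [hgbar, hSdef]
    congr 1
    have h4 : ∑ j, gradient (f j) (y j) = ∑ j, H j + ∑ j, gradient (f j) xstar := by
      rw [← Finset.sum_add_distrib]
      simp [hH]
    rw [h4, hsumgrad, add_zero]
  -- pointwise bound
  have hpt : ∀ i : Fin n, ‖gradient (f i) x - gradient (f i) (y i) + gbar‖ ^ 2
      ≤ 2 * ‖G i‖ ^ 2 + 2 * ‖H i - (n : ℝ)⁻¹ • S‖ ^ 2 := by
    intro i
    have hid : gradient (f i) x - gradient (f i) (y i) + gbar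
        = G i - (H i - (n : ℝ)⁻¹ • S) := by
      rw [hgb]; simp only [hG, hH]; abel
    rw [hid]
    have h1 : ‖G i - (H i - (n : ℝ)⁻¹ • S)‖ ≤ ‖G i‖ + ‖H i - (n : ℝ)⁻¹ • S‖ := norm_sub_le _ _
    nlinarith [h1, sq_nonneg (‖G i‖ - ‖H i - (n : ℝ)⁻¹ • S‖), norm_nonneg (G i),
      norm_nonneg (H i - (n : ℝ)⁻¹ • S), norm_nonneg (G i - (H i - (n : ℝ)⁻¹ • S))]
  -- variance bound
  have hvar : ∑ i, ‖H i - (n : ℝ)⁻¹ • S‖ ^ 2 ≤ ∑ i, ‖H i‖ ^ 2 := by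
    have h1 : ∑ i, ⟪H i, (n : ℝ)⁻¹ • S⟫_ℝ = (n : ℝ)⁻¹ * ‖S‖ ^ 2 := by
      rw [← sum_inner, ← hSdef, real_inner_smul_right, real_inner_self_eq_norm_sq]
    have h2 : ‖(n : ℝ)⁻¹ • S‖ ^ 2 = (n : ℝ)⁻¹ ^ 2 * ‖S‖ ^ 2 := by
      rw [norm_smul, mul_pow]
      congr 1
      rw [Real.norm_eq_abs, sq_abs]
    have hsum : ∑ i, ‖H i - (n : ℝ)⁻¹ • S‖ ^ 2
        = ∑ i, ‖H i‖ ^ 2 - (n : ℝ)⁻¹ * ‖S‖ ^ 2 := by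
      calc ∑ i, ‖H i - (n : ℝ)⁻¹ • S‖ ^ 2
          = ∑ i, (‖H i‖ ^ 2 - 2 * ⟪H i, (n : ℝ)⁻¹ • S⟫_ℝ + ‖(n : ℝ)⁻¹ • S‖ ^ 2) := by
            refine Finset.sum_congr rfl fun i _ => ?_
            rw [norm_sub_sq_real]
        _ = ∑ i, ‖H i‖ ^ 2 - 2 * ((n : ℝ)⁻¹ * ‖S‖ ^ 2)
              + (n : ℝ) * ((n : ℝ)⁻¹ ^ 2 * ‖S‖ ^ 2) := by
            rw [Finset.sum_add_distrib, Finset.sum_sub_distrib, ← Finset.mul_sum, h1,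
              Finset.sum_const, Finset.card_univ, Fintype.card_fin, nsmul_eq_mul, h2]
        _ = ∑ i, ‖H i‖ ^ 2 - (n : ℝ)⁻¹ * ‖S‖ ^ 2 := by
            have hsc : (n : ℝ) * ((n : ℝ)⁻¹ ^ 2 * ‖S‖ ^ 2) = (n : ℝ)⁻¹ * ‖S‖ ^ 2 := by
              rw [pow_two]
              rw [show (n : ℝ) * ((n : ℝ)⁻¹ * (n : ℝ)⁻¹ * ‖S‖ ^ 2)
                = ((n : ℝ) * (n : ℝ)⁻¹) * ((n : ℝ)⁻¹ * ‖S‖ ^ 2) by ring,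
                mul_inv_cancel₀ hn0, one_mul]
            linarith [hsc]
    rw [hsum]
    have hpos : (0 : ℝ) ≤ (n : ℝ)⁻¹ * ‖S‖ ^ 2 := by positivity
    linarith
  -- cocoercivity sums
  have hA : ∑ i, ‖G i‖ ^ 2 ≤ 2 * L * ∑ i, bregDiv (f i) x xstar := by
    rw [Finset.mul_sum]
    exact Finset.sum_le_sum fun i _ => hcoco i x
  have hC : ∑ i, ‖H i‖ ^ 2 ≤ 2 * L * ∑ i, bregDiv (f i) (y i) xstar := by
    rw [Finset.mul_sum]
    exact Finset.sum_le_sum fun i _ => hcoco i (y i)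
  set Dx : ℝ := ∑ i, bregDiv (f i) x xstar with hDx
  set Dy : ℝ := ∑ i, bregDiv (f i) (y i) xstar with hDy
  have hT : ∑ i, ‖gradient (f i) x - gradient (f i) (y i) + gbar‖ ^ 2
      ≤ 4 * L * Dx + 4 * L * Dy := by
    calc ∑ i, ‖gradient (f i) x - gradient (f i) (y i) + gbar‖ ^ 2
        ≤ ∑ i, (2 * ‖G i‖ ^ 2 + 2 * ‖H i - (n : ℝ)⁻¹ • S‖ ^ 2) :=
          Finset.sum_le_sum fun i _ => hpt i
      _ = 2 * ∑ i, ‖G i‖ ^ 2 + 2 * ∑ i, ‖H i - (n : ℝ)⁻¹ • S‖ ^ 2 := by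
          rw [Finset.sum_add_distrib, Finset.mul_sum, Finset.mul_sum]
      _ ≤ 4 * L * Dx + 4 * L * Dy := by linarith
  have hnn : (0 : ℝ) ≤ (n : ℝ)⁻¹ := by positivity
  have hlhs := mul_le_mul_of_nonneg_left hT hnn
  have hxeq : (n : ℝ)⁻¹ * Dx = F x - F xstar := hbreg x
  have hfrac : ((n : ℝ) - 1) / (n : ℝ) = 1 - (n : ℝ)⁻¹ := by field_simp
  have hmid : (n : ℝ)⁻¹ * (4 * L * Dx + 4 * L * Dy)
      = 4 * L * ((n : ℝ)⁻¹ * Dx) + 4 * L * ((n : ℝ)⁻¹ * Dy) := by ring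
  have hR : 8 * L * (F x - F xstar)
        + 4 * L * (Dy - ((n : ℝ)⁻¹ * Dx + (((n : ℝ) - 1) / n) * Dy))
      = 4 * L * (F x - F xstar) + 4 * L * ((n : ℝ)⁻¹ * Dy) := by
    rw [hxeq, hfrac]
    ring
  rw [hR]
  rw [hmid, hxeq] at hlhs
  linarith
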